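/- Suppose α > 3. Then the speed decays faster than 1/t: ‖ẋ(t)‖ = o(1/t) as t → +∞, i.e. t·‖ẋ(t)‖ → 0 as t → +∞. -/

import Mathlib

open Set Filter MeasureTheory Real
open scoped Topology RealInnerProductSpace

lemma grad_ineq' {H : Type*} [NormedAddCommGroup H] [InnerProductSpace ℝ H] [CompleteSpace H]
    {Φ : H → ℝ} (hconv : ConvexOn ℝ Set.univ Φ) (hd : Differentiable ℝ Φ) (y z : H) :
    Φ y + ⟪gradient Φ y, z - y⟫ ≤ Φ z := by
  set g : ℝ → ℝ := fun s => Φ (y + s • (z - y)) with hg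
  have hgconv : ConvexOn ℝ Set.univ g := by
    have := hconv.comp_affineMap (AffineMap.lineMap y z : ℝ →ᵃ[ℝ] H)
    simpa [g, AffineMap.lineMap_apply, Function.comp_def, add_comm] using this
  have hc : HasDerivAt (fun s : ℝ => y + s • (z - y)) (z - y) 0 := by
    simpa using ((hasDerivAt_id (0:ℝ)).smul_const (z - y)).const_add y
  have hfd : HasFDerivAt Φ (InnerProductSpace.toDual ℝ H (gradient Φ y)) y :=
    hasGradientAt_iff_hasFDerivAt.mp (hd y).hasGradientAt
  have hder : HasDerivAt g ⟪gradient Φ y, z - y⟫ 0 := by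
    have hfd' : HasFDerivAt Φ (InnerProductSpace.toDual ℝ H (gradient Φ y)) (y + (0:ℝ) • (z - y)) := by simpa using hfd
    have := hfd'.comp_hasDerivAt (x := (0:ℝ)) hc
    simpa [InnerProductSpace.toDual_apply_apply, g, Function.comp_def] using this
  have hslope := hgconv.le_slope_of_hasDerivAt (mem_univ (0:ℝ)) (mem_univ 1) one_pos hder
  have : slope g 0 1 = Φ z - Φ y := by
    simp [slope_def_field, g]
  rw [this] at hslope
  linarith



set_option maxHeartbeats 1000000 in
/-- for `α > 3`, the speed of any trajectory of `(AVD)_α` satisfies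
`‖ẋ(t)‖ = o(1/t)`, i.e. `t ‖ẋ(t)‖ → 0` as `t → ∞`. -/
theorem stmt_5
    {H : Type*} [NormedAddCommGroup H] [InnerProductSpace ℝ H] [CompleteSpace H]
    (Φ : H → ℝ) (hΦconv : ConvexOn ℝ Set.univ Φ) (hΦC1 : ContDiff ℝ 1 Φ)
    (xstar : H) (hxstar : ∀ y : H, Φ xstar ≤ Φ y)
    (α t₀ : ℝ) (hα : 3 < α) (ht₀ : 0 < t₀)
    (x : ℝ → H) (hx : ContDiff ℝ 2 x)
    (hode : ∀ t : ℝ, t₀ ≤ t →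
      deriv (deriv x) t + (α / t) • deriv x t + gradient Φ (x t) = 0) :
    Filter.Tendsto (fun t : ℝ => t * ‖deriv x t‖) Filter.atTop (nhds 0) := by
  -- basic regularity
  have hx' : ContDiff ℝ ((1:WithTop ℕ∞) + 1) x := by
    have : ((1:WithTop ℕ∞) + 1) = 2 := by norm_num
    rw [this]; exact hx
  obtain ⟨hxdiff, -, hvC1⟩ := contDiff_succ_iff_deriv.mp hx'
  set v : ℝ → H := deriv x with hv
  set a : ℝ → H := deriv v with ha
  have hvdiff : Differentiable ℝ v := hvC1.differentiable one_ne_zero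
  have hacont : Continuous a := hvC1.continuous_deriv le_rfl
  have hvcont : Continuous v := hvdiff.continuous
  have hxcont : Continuous x := hxdiff.continuous
  have hΦdiff : Differentiable ℝ Φ := hΦC1.differentiable one_ne_zero
  set G : H → H := fun y => gradient Φ y with hGdef
  have hGcont : Continuous G := by
    have : G = fun y => (InnerProductSpace.toDual ℝ H).symm (fderiv ℝ Φ y) := rfl
    rw [this]
    exact (InnerProductSpace.toDual ℝ H).symm.continuous.comp (hΦC1.continuous_fderiv one_ne_zero)
  have hxd : ∀ t, HasDerivAt x (v t) t := fun t => (hxdiff t).hasDerivAt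
  have hvd : ∀ t, HasDerivAt v (a t) t := fun t => (hvdiff t).hasDerivAt
  have hode' : ∀ t, t₀ ≤ t → a t = -G (x t) - (α / t) • v t := by
    intro t ht
    have h := hode t ht
    have h2 := eq_neg_of_add_eq_zero_left h
    rw [eq_sub_iff_add_eq]
    rw [eq_neg_iff_add_eq_zero] at h2
    linear_combination (norm := module) h2
  -- constants
  set lam : ℝ := (α + 1) / 2 with hlam_def
  set c : ℝ := (α - 3) / 2 with hc_def
  have hcpos : 0 < c := by rw [hc_def]; linarith
  have hlampos : 0 < lam := by rw [hlam_def]; linarith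
  -- basic functions
  set b : ℝ → ℝ := fun t => Φ (x t) - Φ xstar with hb_def
  set u : ℝ → H := fun t => x t - xstar with hu_def
  set w : ℝ → H := fun t => lam • u t + t • v t with hw_def
  have hbnonneg : ∀ t, 0 ≤ b t := fun t => sub_nonneg.2 (hxstar _)
  have hbd : ∀ t, HasDerivAt b ⟪G (x t), v t⟫ t := by
    intro t
    have hfd : HasFDerivAt Φ (InnerProductSpace.toDual ℝ H (G (x t))) (x t) :=
      hasGradientAt_iff_hasFDerivAt.mp (hΦdiff (x t)).hasGradientAt
    have := (hfd.comp_hasDerivAt t (hxd t)).sub_const (Φ xstar)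
    simpa [InnerProductSpace.toDual_apply_apply, b] using this
  have hbcont : Continuous b := by
    have : ∀ t, HasDerivAt b ⟪G (x t), v t⟫ t := hbd
    exact continuous_iff_continuousAt.2 fun t => (hbd t).continuousAt
  have hud : ∀ t, HasDerivAt u (v t) t := fun t => (hxd t).sub_const _
  have hucont : Continuous u := hxcont.sub continuous_const
  have hwd : ∀ t, HasDerivAt w (lam • v t + (v t + t • a t)) t := by
    intro t
    exact ((hud t).const_smul lam).add
      (((hasDerivAt_id t).smul (hvd t)).congr_deriv (by simp [one_smul, add_comm]))
  have hwcont : Continuous w :=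
    ((hucont.const_smul lam)).add (continuous_id.smul hvcont)
  -- the Lyapunov function E
  set F : ℝ → ℝ := fun t => t * (b t + ⟪v t, v t⟫) with hF_def
  set E : ℝ → ℝ := fun t => t ^ 2 * b t + (1/2) * ⟪w t, w t⟫ + (lam * c / 2) * ⟪u t, u t⟫
    with hE_def
  set e : ℝ → ℝ := fun t =>
      (2 * t * b t + t ^ 2 * ⟪G (x t), v t⟫)
      + (1/2) * (⟪w t, lam • v t + (v t + t • a t)⟫ + ⟪lam • v t + (v t + t • a t), w t⟫)
      + (lam * c / 2) * (⟪u t, v t⟫ + ⟪v t, u t⟫) with he_def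
  have hEd : ∀ t, HasDerivAt E (e t) t := by
    intro t
    have h1 : HasDerivAt (fun s => s ^ 2 * b s) (2 * t * b t + t ^ 2 * ⟪G (x t), v t⟫) t := by
      have := (hasDerivAt_pow 2 t).mul (hbd t)
      convert this using 1; rfl; rfl; rfl; ring
    have h2 : HasDerivAt (fun s => ⟪w s, w s⟫)
        (⟪w t, lam • v t + (v t + t • a t)⟫ + ⟪lam • v t + (v t + t • a t), w t⟫) t :=
      (hwd t).inner ℝ (hwd t)
    have h3 : HasDerivAt (fun s => ⟪u s, u s⟫) (⟪u t, v t⟫ + ⟪v t, u t⟫) t :=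
      (hud t).inner ℝ (hud t)
    exact (h1.add (h2.const_mul (1/2))).add (h3.const_mul (lam * c / 2))
  have hecont : Continuous e := by
    refine Continuous.add (Continuous.add ?_ ?_) ?_
    · exact ((continuous_const.mul continuous_id).mul hbcont).add
        ((continuous_pow 2).mul ((hGcont.comp hxcont).inner hvcont))
    · exact continuous_const.mul
        ((hwcont.inner (((hvcont.const_smul lam)).add (hvcont.add (continuous_id.smul hacont)))).add
          ((((hvcont.const_smul lam)).add (hvcont.add (continuous_id.smul hacont))).inner hwcont))
    · exact continuous_const.mul ((hucont.inner hvcont).add (hvcont.inner hucont))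
  have hFcont : Continuous F := continuous_id.mul (hbcont.add (hvcont.inner hvcont))
  have hFnonneg : ∀ t, t₀ ≤ t → 0 ≤ F t := by
    intro t ht
    have htpos : (0:ℝ) < t := lt_of_lt_of_le ht₀ ht
    exact mul_nonneg htpos.le (add_nonneg (hbnonneg t) real_inner_self_nonneg)
  have hEnonneg : ∀ t, 0 ≤ E t := by
    intro t
    have h1 : (0:ℝ) ≤ t ^ 2 * b t := mul_nonneg (sq_nonneg t) (hbnonneg t)
    have h2 : (0:ℝ) ≤ ⟪w t, w t⟫ := real_inner_self_nonneg
    have h3 : (0:ℝ) ≤ ⟪u t, u t⟫ := real_inner_self_nonneg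
    have h4 : 0 ≤ lam * c / 2 := by positivity
    have : E t = t ^ 2 * b t + (1/2) * ⟪w t, w t⟫ + (lam * c / 2) * ⟪u t, u t⟫ := rfl
    rw [this]
    exact add_nonneg (add_nonneg h1 (mul_nonneg (by norm_num) h2)) (mul_nonneg h4 h3)
  have hkey : ∀ t, t₀ ≤ t → e t ≤ -(c * F t) := by
    intro t ht
    have htpos : (0:ℝ) < t := lt_of_lt_of_le ht₀ ht
    have hta : t • a t = -(t • G (x t)) - α • v t := by
      rw [hode' t ht, smul_sub, smul_smul,
        (by field_simp : t * (α / t) = α), smul_neg]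
    have hGu : b t ≤ ⟪G (x t), u t⟫ := by
      have := grad_ineq' hΦconv hΦdiff (x t) xstar
      have h2 : ⟪G (x t), xstar - x t⟫ = -⟪G (x t), u t⟫ := by
        rw [hu_def]; simp [← inner_neg_right, neg_sub]
      rw [h2] at this
      have hb' : b t = Φ (x t) - Φ xstar := rfl
      rw [hb']; linarith
    have hvv : (0:ℝ) ≤ ⟪v t, v t⟫ := real_inner_self_nonneg
    have he_eq : e t = 2 * t * b t - c * (t * ⟪v t, v t⟫) - lam * (t * ⟪G (x t), u t⟫) := by
      simp only [he_def, hw_def]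
      rw [hta]
      simp only [inner_add_left, inner_add_right, inner_sub_left, inner_sub_right,
        inner_neg_left, inner_neg_right, real_inner_smul_left, real_inner_smul_right]
      rw [real_inner_comm (v t) (u t), real_inner_comm (G (x t)) (u t),
        real_inner_comm (G (x t)) (v t), hlam_def, hc_def]
      ring
    have hF_eq : F t = t * (b t + ⟪v t, v t⟫) := rfl
    rw [he_eq, hF_eq]
    have hlc : lam = 2 + c := by rw [hlam_def, hc_def]; ring
    nlinarith [mul_nonneg (mul_nonneg hlampos.le htpos.le) (sub_nonneg.2 hGu),
      mul_nonneg htpos.le hvv, mul_nonneg htpos.le (hbnonneg t)]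
  -- FTC bound and integrability of F
  have hIb : ∀ T, t₀ ≤ T → (∫ t in t₀..T, F t) ≤ E t₀ / c := by
    intro T hT
    have hftc : ∫ t in t₀..T, e t = E T - E t₀ :=
      intervalIntegral.integral_eq_sub_of_hasDerivAt (fun t _ => hEd t)
        (hecont.intervalIntegrable _ _)
    have hmono : (∫ t in t₀..T, c * F t) ≤ ∫ t in t₀..T, -e t := by
      apply intervalIntegral.integral_mono_on hT
      · exact (continuous_const.mul hFcont).intervalIntegrable _ _
      · exact hecont.neg.intervalIntegrable _ _
      · intro s hs
        have := hkey s hs.1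
        linarith
    rw [intervalIntegral.integral_neg, hftc, intervalIntegral.integral_const_mul] at hmono
    have hET := hEnonneg T
    rw [le_div_iff₀ hcpos]
    nlinarith
  have hFint : IntegrableOn F (Ioi t₀) := by
    apply MeasureTheory.integrableOn_Ioi_of_intervalIntegral_norm_bounded (E t₀ / c) t₀
      (fun i => hFcont.integrableOn_Ioc) tendsto_id
    filter_upwards [eventually_ge_atTop t₀] with i hi
    simp only [id_eq]
    have hcg : ∫ t in t₀..i, ‖F t‖ = ∫ t in t₀..i, F t := by
      apply intervalIntegral.integral_congr
      intro s hs
      rw [uIcc_of_le hi] at hs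
      exact Real.norm_of_nonneg (hFnonneg s hs.1)
    rw [hcg]; exact hIb i hi
  -- phase 2 : the function p
  set p : ℝ → ℝ := fun t => t ^ 2 * b t + (1/2) * (t ^ 2 * ⟪v t, v t⟫) with hp_def
  set q : ℝ → ℝ := fun t => (2 * t * b t + t ^ 2 * ⟪G (x t), v t⟫)
      + (1/2) * ((2 * t) * ⟪v t, v t⟫ + t ^ 2 * (⟪v t, a t⟫ + ⟪a t, v t⟫)) with hq_def
  have hpd : ∀ t, HasDerivAt p (q t) t := by
    intro t
    have h1 : HasDerivAt (fun s => s ^ 2 * b s) (2 * t * b t + t ^ 2 * ⟪G (x t), v t⟫) t := by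
      have := (hasDerivAt_pow 2 t).mul (hbd t); convert this using 1; rfl; rfl; rfl; ring
    have h2 : HasDerivAt (fun s => s ^ 2 * ⟪v s, v s⟫)
        ((2 * t) * ⟪v t, v t⟫ + t ^ 2 * (⟪v t, a t⟫ + ⟪a t, v t⟫)) t := by
      have := (hasDerivAt_pow 2 t).mul ((hvd t).inner ℝ (hvd t)); convert this using 1; rfl; rfl; rfl; ring
    exact h1.add (h2.const_mul (1/2))
  have hpcont : Continuous p := continuous_iff_continuousAt.2 fun t => (hpd t).continuousAt
  have hpnonneg : ∀ t, 0 ≤ p t := by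
    intro t
    have h1 : (0:ℝ) ≤ t ^ 2 * b t := mul_nonneg (sq_nonneg t) (hbnonneg t)
    have h2 : (0:ℝ) ≤ t ^ 2 * ⟪v t, v t⟫ := mul_nonneg (sq_nonneg t) real_inner_self_nonneg
    have : p t = t ^ 2 * b t + (1/2) * (t ^ 2 * ⟪v t, v t⟫) := rfl
    rw [this]; exact add_nonneg h1 (mul_nonneg (by norm_num) h2)
  set ψ : ℝ → ℝ := fun t => 2 * t * b t with hψ_def
  have hψcont : Continuous ψ := ((continuous_const.mul continuous_id).mul hbcont)
  have hψnonneg : ∀ t, t₀ ≤ t → 0 ≤ ψ t := by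
    intro t ht
    have htpos : (0:ℝ) < t := lt_of_lt_of_le ht₀ ht
    exact mul_nonneg (by linarith) (hbnonneg t)
  have hqle : ∀ t, t₀ ≤ t → q t ≤ ψ t := by
    intro t ht
    have htpos : (0:ℝ) < t := lt_of_lt_of_le ht₀ ht
    have htne : t ≠ 0 := htpos.ne'
    have hva : ⟪v t, a t⟫ = -⟪G (x t), v t⟫ - (α / t) * ⟪v t, v t⟫ := by
      rw [hode' t ht]
      rw [inner_sub_right, inner_neg_right, real_inner_smul_right,
        real_inner_comm (v t) (G (x t))]
    have hav : ⟪a t, v t⟫ = ⟪v t, a t⟫ := real_inner_comm _ _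
    have hvv : (0:ℝ) ≤ ⟪v t, v t⟫ := real_inner_self_nonneg
    have hqeq : q t = ψ t + (1 - α) * (t * ⟪v t, v t⟫) := by
      simp only [hq_def, hψ_def]
      rw [hav, hva]
      field_simp
      ring
    rw [hqeq]
    nlinarith [mul_nonneg htpos.le hvv]
  have hψle : ∀ t, t₀ ≤ t → ψ t ≤ 2 * F t := by
    intro t ht
    have htpos : (0:ℝ) < t := lt_of_lt_of_le ht₀ ht
    have hvv : (0:ℝ) ≤ ⟪v t, v t⟫ := real_inner_self_nonneg
    have h1 : ψ t = 2 * t * b t := rfl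
    have h2 : F t = t * (b t + ⟪v t, v t⟫) := rfl
    rw [h1, h2]
    nlinarith [mul_nonneg htpos.le hvv]
  have hψint : IntegrableOn ψ (Ioi t₀) := by
    apply Integrable.mono' (hFint.const_mul 2)
    · exact hψcont.aestronglyMeasurable
    · rw [ae_restrict_iff' measurableSet_Ioi]
      filter_upwards with t ht
      rw [Real.norm_of_nonneg (hψnonneg t ht.le)]
      exact hψle t ht.le
  -- the primitive A of ψ and its limit
  set A : ℝ → ℝ := fun T => ∫ s in t₀..T, ψ s with hA_def
  have hAd : ∀ T, HasDerivAt A (ψ T) T := fun T =>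
    intervalIntegral.integral_hasDerivAt_right (hψcont.intervalIntegrable _ _)
      (hψcont.stronglyMeasurableAtFilter _ _) hψcont.continuousAt
  have hAcont : Continuous A := continuous_iff_continuousAt.2 fun T => (hAd T).continuousAt
  set I : ℝ := ∫ s in Ioi t₀, ψ s with hI_def
  have hAtend : Tendsto A atTop (𝓝 I) :=
    MeasureTheory.intervalIntegral_tendsto_integral_Ioi t₀ hψint tendsto_id
  have hψae : 0 ≤ᵐ[volume.restrict (Ioi t₀)] ψ := by
    filter_upwards [ae_restrict_mem measurableSet_Ioi] with t ht
    exact hψnonneg t ht.le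
  have hAle : ∀ T, t₀ ≤ T → A T ≤ I := by
    intro T hT
    have h1 : A T = ∫ s in Ioc t₀ T, ψ s := intervalIntegral.integral_of_le hT
    rw [h1]
    exact setIntegral_mono_set hψint hψae (HasSubset.Subset.eventuallyLE Ioc_subset_Ioi_self)
  -- the auxiliary monotone function g
  set g : ℝ → ℝ := fun t => p t - A t with hg_def
  have hgd : ∀ t, HasDerivAt g (q t - ψ t) t := fun t => (hpd t).sub (hAd t)
  have hganti : AntitoneOn g (Ici t₀) := by
    apply antitoneOn_of_deriv_nonpos (convex_Ici t₀) (hpcont.sub hAcont).continuousOn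
    · intro s hs
      exact (hgd s).differentiableAt.differentiableWithinAt
    · intro s hs
      rw [interior_Ici] at hs
      rw [show (p - A) = g from rfl, (hgd s).deriv]
      have := hqle s (le_of_lt hs)
      linarith
  have hglb : ∀ t, t₀ ≤ t → -I ≤ g t := by
    intro t ht
    have h1 := hAle t ht
    have h2 := hpnonneg t
    have h3 : g t = p t - A t := rfl
    rw [h3]; linarith
  obtain ⟨l, hgl⟩ : ∃ l, Tendsto g atTop (𝓝 l) := by
    have hanti : Antitone (fun t => g (max t t₀)) := fun s t hst =>
      hganti (mem_Ici.2 (le_max_right s t₀)) (mem_Ici.2 (le_max_right t t₀))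
        (max_le_max hst le_rfl)
    have hbdd : BddBelow (Set.range (fun t => g (max t t₀))) := by
      refine ⟨-I, ?_⟩
      rintro y ⟨t, rfl⟩
      exact hglb _ (le_max_right _ _)
    refine ⟨_, Tendsto.congr' ?_ (tendsto_atTop_ciInf hanti hbdd)⟩
    filter_upwards [eventually_ge_atTop t₀] with t ht
    rw [max_eq_left ht]
  have hptend : Tendsto p atTop (𝓝 (l + I)) := by
    refine Tendsto.congr (fun t => ?_) (hgl.add hAtend)
    have h3 : g t = p t - A t := rfl
    rw [h3]; ring
  have hL0 : 0 ≤ l + I := ge_of_tendsto' hptend hpnonneg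
  have hLzero : l + I = 0 := by
    by_contra hne
    have hLpos : 0 < l + I := lt_of_le_of_ne hL0 (Ne.symm hne)
    have hev : ∀ᶠ t in atTop, (l + I) / 2 ≤ p t :=
      hptend.eventually (eventually_ge_nhds (by linarith))
    rw [eventually_atTop] at hev
    obtain ⟨T, hT⟩ := hev
    set T' := max T t₀ with hT'_def
    have hT't₀ : t₀ ≤ T' := le_max_right T t₀
    have hT'pos : 0 < T' := lt_of_lt_of_le ht₀ hT't₀
    have hcomp : ∀ t ∈ Ioi T', (l + I) / 2 * t⁻¹ ≤ F t := by
      intro t ht'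
      have h1 : T' < t := ht'
      have htt0 : t₀ ≤ t := le_trans hT't₀ h1.le
      have htpos : (0:ℝ) < t := lt_of_lt_of_le ht₀ htt0
      have hp2 := hT t (le_trans (le_max_left T t₀) h1.le)
      have hvv : (0:ℝ) ≤ ⟪v t, v t⟫ := real_inner_self_nonneg
      have hFt : F t = t * (b t + ⟪v t, v t⟫) := rfl
      have hpt : p t = t ^ 2 * b t + 1/2 * (t ^ 2 * ⟪v t, v t⟫) := rfl
      have hple : p t ≤ t ^ 2 * (b t + ⟪v t, v t⟫) := by
        rw [hpt]; nlinarith [mul_nonneg (sq_nonneg t) hvv]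
      have hcalc : (l + I) / 2 * t⁻¹ ≤ (t ^ 2 * (b t + ⟪v t, v t⟫)) * t⁻¹ :=
        mul_le_mul_of_nonneg_right (le_trans hp2 hple) (inv_nonneg.2 htpos.le)
      have heq : (t ^ 2 * (b t + ⟪v t, v t⟫)) * t⁻¹ = t * (b t + ⟪v t, v t⟫) := by
        field_simp
      rw [heq] at hcalc
      rw [hFt]
      exact hcalc
    have hintc : IntegrableOn (fun t => (l + I) / 2 * t⁻¹) (Ioi T') := by
      apply Integrable.mono' (hFint.mono_set (Ioi_subset_Ioi hT't₀))
      · exact (measurable_const.mul measurable_inv).aestronglyMeasurable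
      · rw [ae_restrict_iff' measurableSet_Ioi]
        filter_upwards with t ht
        have h1 : (0:ℝ) < t := lt_trans hT'pos ht
        rw [Real.norm_of_nonneg (by positivity)]
        exact hcomp t ht
    have hinv : IntegrableOn (fun t : ℝ => t⁻¹) (Ioi T') := by
      have h2 := hintc.const_mul (2 / (l + I))
      have h3 : (fun t : ℝ => 2 / (l + I) * ((l + I) / 2 * t⁻¹)) = fun t : ℝ => t⁻¹ := by
        funext t
        have h4 : 2 / (l + I) * ((l + I) / 2) = 1 := by field_simp
        rw [← mul_assoc, h4, one_mul]
      rwa [h3] at h2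
    have heqon : EqOn (fun t : ℝ => t⁻¹) (fun t : ℝ => t ^ (-1 : ℝ)) (Ioi T') := by
      intro t ht
      show t⁻¹ = t ^ (-1 : ℝ)
      rw [show ((-1:ℝ)) = ((-1 : ℤ) : ℝ) by norm_num, Real.rpow_intCast, zpow_neg_one]
    have hrp : IntegrableOn (fun t : ℝ => t ^ (-1 : ℝ)) (Ioi T') :=
      (integrableOn_congr_fun heqon measurableSet_Ioi).mp hinv
    rw [integrableOn_Ioi_rpow_iff hT'pos] at hrp
    norm_num at hrp
  -- conclusion
  rw [hLzero] at hptend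
  have hsq : Tendsto (fun t => t ^ 2 * ⟪v t, v t⟫) atTop (𝓝 0) := by
    have hg0 : Tendsto (fun t => 2 * p t) atTop (𝓝 0) := by
      have h2 := hptend.const_mul 2
      rw [mul_zero] at h2
      exact h2
    refine squeeze_zero' (Filter.Eventually.of_forall fun t =>
      mul_nonneg (sq_nonneg t) real_inner_self_nonneg)
      (Filter.Eventually.of_forall fun t => ?_) hg0
    have hpt : p t = t ^ 2 * b t + 1/2 * (t ^ 2 * ⟪v t, v t⟫) := rfl
    have h1 : (0:ℝ) ≤ t ^ 2 * b t := mul_nonneg (sq_nonneg t) (hbnonneg t)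
    show t ^ 2 * ⟪v t, v t⟫ ≤ 2 * p t
    rw [hpt]
    have h5 : (1:ℝ)/2 * (t ^ 2 * ⟪v t, v t⟫) ≤ t ^ 2 * b t + 1/2 * (t ^ 2 * ⟪v t, v t⟫) :=
      le_add_of_nonneg_left h1
    calc t ^ 2 * ⟪v t, v t⟫ = 2 * ((1:ℝ)/2 * (t ^ 2 * ⟪v t, v t⟫)) := by ring
      _ ≤ 2 * (t ^ 2 * b t + 1/2 * (t ^ 2 * ⟪v t, v t⟫)) :=
          mul_le_mul_of_nonneg_left h5 (by norm_num)
  have hfinal : Tendsto (fun t => Real.sqrt (t ^ 2 * ⟪v t, v t⟫)) atTop (𝓝 0) := by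
    have h1 := (Real.continuous_sqrt.tendsto 0).comp hsq
    simpa [Function.comp_def] using h1
  apply hfinal.congr'
  filter_upwards [eventually_ge_atTop (0:ℝ)] with t ht
  rw [real_inner_self_eq_norm_sq]
  rw [show t ^ 2 * ‖v t‖ ^ 2 = (t * ‖v t‖) ^ 2 by ring, Real.sqrt_sq (by positivity)]
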